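/- arXiv:1511.08086 — 3 statements merged into one kernel-verified Lean document; each statement's English description precedes it below -/
import Mathlib

section
/- Let G and H be finite simple graphs, each with at least two vertices. If the domination number of H equals 1 (i.e., H has a dominating vertex), then the domination number of the lexicographic product G[H] equals the domination number of G. -/
/-- The lexicographic product `G[H]` of two simple graphs: `(a, x)` is adjacent to
`(b, y)` iff `a` is adjacent to `b` in `G`, or `a = b` and `x` is adjacent to `y` in `H`. -/
def lexProd {α β : Type*} (G : SimpleGraph α) (H : SimpleGraph β) :
    SimpleGraph (α × β) where
  Adj p q := G.Adj p.1 q.1 ∨ (p.1 = q.1 ∧ H.Adj p.2 q.2)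
  symm := by
    constructor
    rintro ⟨a, x⟩ ⟨b, y⟩ (h | ⟨rfl, h⟩)
    · exact Or.inl h.symm
    · exact Or.inr ⟨rfl, h.symm⟩
  loopless := by
    constructor
    rintro ⟨a, x⟩ (h | ⟨-, h⟩)
    · exact G.irrefl h
    · exact H.irrefl h

/-- `S` is a dominating set of `G`: every vertex not in `S` is adjacent to a vertex of `S`. -/
def IsDomSet {α : Type*} (G : SimpleGraph α) (S : Finset α) : Prop :=
  ∀ v, v ∉ S → ∃ u ∈ S, G.Adj u v

/-- The domination number `γ(G)`: the minimum cardinality of a dominating set of `G`. -/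
noncomputable def gamma {α : Type*} [Fintype α] (G : SimpleGraph α) : ℕ :=
  sInf {n | ∃ S : Finset α, IsDomSet G S ∧ S.card = n}


lemma gamma_set_nonempty {α : Type*} [Fintype α] (G : SimpleGraph α) :
    {n | ∃ S : Finset α, IsDomSet G S ∧ S.card = n}.Nonempty :=
  ⟨Finset.univ.card, Finset.univ, fun v hv => absurd (Finset.mem_univ v) hv, rfl⟩

lemma gamma_le {α : Type*} [Fintype α] {G : SimpleGraph α} {S : Finset α}
    (hS : IsDomSet G S) : gamma G ≤ S.card :=
  Nat.sInf_le ⟨S, hS, rfl⟩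

lemma exists_isDomSet_card_gamma {α : Type*} [Fintype α] (G : SimpleGraph α) :
    ∃ S : Finset α, IsDomSet G S ∧ S.card = gamma G :=
  Nat.sInf_mem (gamma_set_nonempty G)

/-- If `G` and `H` each have at least two vertices and `γ(H) = 1`, then
`γ(G[H]) = γ(G)`. -/
theorem gamma_lexProd_of_gamma_eq_one {α β : Type*} [Fintype α] [Fintype β]
    (G : SimpleGraph α) (H : SimpleGraph β)
    (hα : 2 ≤ Fintype.card α) (hβ : 2 ≤ Fintype.card β)
    (hH : gamma H = 1) :
    gamma (lexProd G H) = gamma G := by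
  classical
  -- A dominating vertex of H
  obtain ⟨SH, hSH, hSHcard⟩ := exists_isDomSet_card_gamma H
  rw [hH, Finset.card_eq_one] at hSHcard
  obtain ⟨x0, rfl⟩ := hSHcard
  obtain ⟨S, hS, hScard⟩ := exists_isDomSet_card_gamma G
  have hβne : Nonempty β := by
    have : 0 < Fintype.card β := by omega
    exact Fintype.card_pos_iff.mp this
  apply le_antisymm
  · -- γ(G[H]) ≤ γ(G) via S × {x0}
    have hdom : IsDomSet (lexProd G H) (S ×ˢ {x0}) := by
      rintro ⟨b, y⟩ hby
      by_cases hb : b ∈ S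
      · have hy : y ≠ x0 := by
          intro h; subst h
          exact hby (Finset.mem_product.mpr ⟨hb, Finset.mem_singleton_self _⟩)
        have hyx : y ∉ ({x0} : Finset β) := by simpa using hy
        obtain ⟨u, hu, hadj⟩ := hSH y hyx
        exact ⟨(b, u), Finset.mem_product.mpr ⟨hb, hu⟩, Or.inr ⟨rfl, hadj⟩⟩
      · obtain ⟨a, ha, hadj⟩ := hS b hb
        exact ⟨(a, x0), Finset.mem_product.mpr ⟨ha, Finset.mem_singleton_self _⟩,
          Or.inl hadj⟩
    calc gamma (lexProd G H) ≤ (S ×ˢ {x0}).card := gamma_le hdom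
      _ = gamma G := by rw [Finset.card_product, Finset.card_singleton, mul_one, hScard]
  · -- γ(G) ≤ γ(G[H]) via projection
    obtain ⟨T, hT, hTcard⟩ := exists_isDomSet_card_gamma (lexProd G H)
    have hdom : IsDomSet G (T.image Prod.fst) := by
      intro b hb
      obtain ⟨y⟩ := hβne
      have hbyT : (b, y) ∉ T := fun h => hb (Finset.mem_image_of_mem _ h)
      obtain ⟨⟨a, x⟩, haT, hadj⟩ := hT (b, y) hbyT
      rcases hadj with h | ⟨h, -⟩
      · exact ⟨a, Finset.mem_image_of_mem _ haT, h⟩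
      · simp only at h
        exact absurd (h ▸ Finset.mem_image_of_mem Prod.fst haT) hb
    calc gamma G ≤ (T.image Prod.fst).card := gamma_le hdom
      _ ≤ T.card := Finset.card_image_le
      _ = gamma (lexProd G H) := hTcard
end

section
/- Let G be a finite simple graph and let n ≥ 2 be a natural number. Then G[nK₁] is isomorphic to (nK₁)[G] if and only if G is totally disconnected (has no edges), where nK₁ denotes the edgeless graph on n vertices. -/
lemma lexProd_adj {α β : Type*} (G : SimpleGraph α) (H : SimpleGraph β) (p q : α × β) :
    (lexProd G H).Adj p q ↔ G.Adj p.1 q.1 ∨ (p.1 = q.1 ∧ H.Adj p.2 q.2) := Iff.rfl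

/-- For `n ≥ 2`, `G[nK₁] ≅ (nK₁)[G]` if and only if `G` is totally disconnected. -/
theorem lexProd_bot_comm_iff {α : Type*} [Fintype α] (G : SimpleGraph α) (n : ℕ)
    (hn : 2 ≤ n) :
    Nonempty (lexProd G (⊥ : SimpleGraph (Fin n)) ≃g lexProd (⊥ : SimpleGraph (Fin n)) G) ↔
      G = ⊥ := by
  constructor
  · rintro ⟨f⟩
    -- count ordered adjacent pairs
    set D := Nat.card {q : α × α // G.Adj q.1 q.2} with hD
    have e0 : {p : ((α × Fin n) × (α × Fin n)) // (lexProd G ⊥).Adj p.1 p.2} ≃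
        {p : ((Fin n × α) × (Fin n × α)) // (lexProd ⊥ G).Adj p.1 p.2} :=
      Equiv.subtypeEquiv (Equiv.prodCongr f.toEquiv f.toEquiv)
        (fun p => by simp [Equiv.prodCongr]; exact (f.map_adj_iff).symm)
    have e1 : {p : ((α × Fin n) × (α × Fin n)) // (lexProd G ⊥).Adj p.1 p.2} ≃
        {q : α × α // G.Adj q.1 q.2} × (Fin n × Fin n) :=
      { toFun := fun p => (⟨(p.1.1.1, p.1.2.1), by
          rcases p.2 with h | ⟨_, h⟩
          · exact h
          · exact absurd h (by simp)⟩, (p.1.1.2, p.1.2.2))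
        invFun := fun q => ⟨((q.1.1.1, q.2.1), (q.1.1.2, q.2.2)), Or.inl q.1.2⟩
        left_inv := fun p => by ext <;> rfl
        right_inv := fun q => by ext <;> rfl }
    have e2 : {p : ((Fin n × α) × (Fin n × α)) // (lexProd ⊥ G).Adj p.1 p.2} ≃
        {q : α × α // G.Adj q.1 q.2} × Fin n :=
      { toFun := fun p => (⟨(p.1.1.2, p.1.2.2), by
          rcases p.2 with h | ⟨_, h⟩
          · exact absurd h (by simp)
          · exact h⟩, p.1.1.1)
        invFun := fun q => ⟨((q.2, q.1.1.1), (q.2, q.1.1.2)), Or.inr ⟨rfl, q.1.2⟩⟩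
        left_inv := fun p => by
          obtain ⟨⟨⟨i, a⟩, ⟨j, b⟩⟩, hp⟩ := p
          rcases hp with h | ⟨h, _⟩
          · exact absurd h (by simp)
          · simp only at h
            subst h
            rfl
        right_inv := fun q => by ext <;> rfl }
    have h1 := Nat.card_congr (e1.symm.trans (e0.trans e2))
    have h2 : n = n * n ∨ Nat.card {q : α × α // G.Adj q.1 q.2} = 0 := by
      simpa [Nat.card_prod, mul_assoc] using h1.symm
    have hD0 : D = 0 := by
      rcases h2 with h | h
      · nlinarith
      · exact h
    have : IsEmpty {q : α × α // G.Adj q.1 q.2} := by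
      rcases (Nat.card_eq_zero).mp hD0 with h | h
      · exact h
      · exact absurd h (by
          have : Finite {q : α × α // G.Adj q.1 q.2} := Subtype.finite
          exact not_infinite_iff_finite.mpr this)
    ext a b
    simp only [SimpleGraph.bot_adj, iff_false]
    intro hab
    exact this.false ⟨(a, b), hab⟩
  · rintro rfl
    refine ⟨⟨Equiv.prodComm α (Fin n), ?_⟩⟩
    intro p q
    simp [lexProd_adj]
end

section
/- Let G be a finite simple graph and let n ≥ 2 be a natural number. Then G[Kₙ] is isomorphic to Kₙ[G] if and only if G is a complete graph, where Kₙ denotes the complete graph on n vertices. -/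
/-- For `n ≥ 2`, `G[Kₙ] ≅ Kₙ[G]` if and only if `G` is a complete graph. -/
theorem lexProd_top_comm_iff {α : Type*} [Fintype α] (G : SimpleGraph α) (n : ℕ)
    (hn : 2 ≤ n) :
    Nonempty (lexProd G (⊤ : SimpleGraph (Fin n)) ≃g lexProd (⊤ : SimpleGraph (Fin n)) G) ↔
      G = ⊤ := by
  constructor
  · rintro ⟨f⟩
    -- non-edge counting
    set S : Type _ := {p : α × α // p.1 ≠ p.2 ∧ ¬ G.Adj p.1 p.2} with hS
    set T₁ : Type _ := {p : (α × Fin n) × (α × Fin n) //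
      p.1 ≠ p.2 ∧ ¬ (lexProd G (⊤ : SimpleGraph (Fin n))).Adj p.1 p.2} with hT₁
    set T₂ : Type _ := {p : (Fin n × α) × (Fin n × α) //
      p.1 ≠ p.2 ∧ ¬ (lexProd (⊤ : SimpleGraph (Fin n)) G).Adj p.1 p.2} with hT₂
    have e12 : T₁ ≃ T₂ := by
      refine ⟨fun p => ⟨(f p.1.1, f p.1.2), ?_, ?_⟩, fun p => ⟨(f.symm p.1.1, f.symm p.1.2), ?_, ?_⟩,
        ?_, ?_⟩
      · simpa using p.2.1
      · intro h; exact p.2.2 (f.map_adj_iff.mp h)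
      · simpa using p.2.1
      · intro h; exact p.2.2 (f.symm.map_adj_iff.mp h)
      · rintro ⟨⟨u, v⟩, h⟩; simp
      · rintro ⟨⟨u, v⟩, h⟩; simp
    have e1 : T₁ ≃ (Fin n × Fin n) × S := by
      refine ⟨fun p => ⟨(p.1.1.2, p.1.2.2), ⟨(p.1.1.1, p.1.2.1), ?_, ?_⟩⟩,
        fun q => ⟨((q.2.1.1, q.1.1), (q.2.1.2, q.1.2)), ?_, ?_⟩, ?_, ?_⟩
      · obtain ⟨hne, hadj⟩ := p.2
        simp only [hT₁, lexProd, not_or, not_and, SimpleGraph.top_adj, not_not] at hadj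
        intro hab
        exact hne (Prod.ext hab (hadj.2 hab))
      · obtain ⟨hne, hadj⟩ := p.2
        simp only [hT₁, lexProd, not_or] at hadj
        exact hadj.1
      · intro h
        exact q.2.2.1 (congrArg Prod.fst h)
      · rintro (h | ⟨h, -⟩)
        · exact q.2.2.2 h
        · exact q.2.2.1 h
      · rintro ⟨⟨⟨a, x⟩, ⟨b, y⟩⟩, h⟩; rfl
      · rintro ⟨⟨x, y⟩, ⟨⟨a, b⟩, h⟩⟩; rfl
    have e2 : T₂ ≃ Fin n × S := by
      have key : ∀ p : (Fin n × α) × (Fin n × α),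
          (p.1 ≠ p.2 ∧ ¬ (lexProd (⊤ : SimpleGraph (Fin n)) G).Adj p.1 p.2) ↔
          (p.1.1 = p.2.1 ∧ p.1.2 ≠ p.2.2 ∧ ¬ G.Adj p.1.2 p.2.2) := by
        rintro ⟨⟨x, a⟩, ⟨y, b⟩⟩
        simp only [lexProd, SimpleGraph.top_adj, ne_eq, Prod.mk.injEq, not_or, not_and,
          not_not]
        tauto
      refine ⟨fun p => ⟨p.1.1.1, ⟨(p.1.1.2, p.1.2.2), ((key p.1).mp p.2).2⟩⟩,
        fun q => ⟨((q.1, q.2.1.1), (q.1, q.2.1.2)), (key _).mpr ⟨rfl, q.2.2⟩⟩, ?_, ?_⟩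
      · rintro ⟨⟨⟨x, a⟩, ⟨y, b⟩⟩, h⟩
        obtain ⟨h1, -⟩ := (key _).mp h
        simp only at h1
        subst h1
        rfl
      · rintro ⟨x, ⟨⟨a, b⟩, h⟩⟩; rfl
    have hcard : n * n * Nat.card S = n * Nat.card S := by
      calc n * n * Nat.card S = Nat.card ((Fin n × Fin n) × S) := by
            simp [Nat.card_prod, mul_assoc]
        _ = Nat.card T₁ := (Nat.card_congr e1).symm
        _ = Nat.card T₂ := Nat.card_congr e12
        _ = Nat.card (Fin n × S) := Nat.card_congr e2
        _ = n * Nat.card S := by simp [Nat.card_prod]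
    have hScard : Nat.card S = 0 := by
      by_contra h
      have := Nat.eq_of_mul_eq_mul_right (Nat.pos_of_ne_zero h)
        (by linarith [hcard] : n * n * Nat.card S = n * Nat.card S)
      nlinarith
    have hSempty : IsEmpty S := by
      have hfin : Finite S := by
        have : Finite (α × α) := Finite.instProd
        exact Subtype.finite
      rcases Nat.card_eq_zero.mp hScard with h | h
      · exact h
      · haveI := h; exact (not_finite S).elim
    ext a b
    simp only [SimpleGraph.top_adj]
    constructor
    · exact G.ne_of_adj
    · intro hab
      by_contra hG
      exact hSempty.false ⟨(a, b), hab, hG⟩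
  · rintro rfl
    refine ⟨⟨Equiv.prodComm α (Fin n), ?_⟩⟩
    rintro ⟨a, x⟩ ⟨b, y⟩
    simp only [lexProd, Equiv.prodComm_apply, Prod.swap, SimpleGraph.top_adj]
    tauto
end
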